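/- Let I be a finite partially ordered set, α ∈ I, and let M : I × I → ℤ[t,t⁻¹] be a transition matrix, i.e. M(β,β) = 1 for all β and M(β,γ) = 0 unless γ ≤ β. Then there is at most one family W : I → ℤ[t,t⁻¹] such that: (i) W(β) = 0 unless β ≤ α; (ii) all coefficients of every W(β) are nonnegative; (iii) W(α) = 1; (iv) for every β < α the Laurent polynomial W(β) has the non-cancellation property; and (v) W satisfies the self-duality equation: for every γ ∈ I, W(γ)(t) = Σ_{β∈I} W(β)(t⁻¹)·M(β,γ). (This is the combinatorial content of Proposition 4.2 of the paper: a Verdier self-dual mixed tilting extension with the non-cancellation property has uniquely determined weight polynomials.) -/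

import Mathlib

open LaurentPolynomial

/-- A Laurent polynomial `p ∈ ℤ[t,t⁻¹]` has the *non-cancellation property* if for every
integer `i`, the coefficients of `t^i` and `t^(-i)` in `p` are not both nonzero. -/
def NonCancellation (p : LaurentPolynomial ℤ) : Prop :=
  ∀ i : ℤ, p.coeff i = 0 ∨ p.coeff (-i) = 0

/-- Let `I` be a finite poset, `α ∈ I`, and `M : I × I → ℤ[t,t⁻¹]` a transition matrix
(`M β β = 1`, and `M β γ = 0` unless `γ ≤ β`).  There is at most one family
`W : I → ℤ[t,t⁻¹]` such that: (i) `W β = 0` unless `β ≤ α`; (ii) all coefficients of each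
`W β` are nonnegative; (iii) `W α = 1`; (iv) `W β` has the non-cancellation property for all
`β < α`; (v) the self-duality equation `W γ (t) = ∑ β, W β (t⁻¹) · M β γ` holds.
(Combinatorial content of Proposition 4.2.) -/
theorem weight_polynomials_unique {I : Type*} [Fintype I] [PartialOrder I] (α : I)
    (M : I → I → LaurentPolynomial ℤ)
    (hMdiag : ∀ β, M β β = 1)
    (hMtri : ∀ β γ, ¬ γ ≤ β → M β γ = 0)
    (W W' : I → LaurentPolynomial ℤ)
    (hWsupp : ∀ β, ¬ β ≤ α → W β = 0)
    (hW'supp : ∀ β, ¬ β ≤ α → W' β = 0)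
    (hWpos : ∀ β, ∀ n : ℤ, 0 ≤ (W β).coeff n)
    (hW'pos : ∀ β, ∀ n : ℤ, 0 ≤ (W' β).coeff n)
    (hWinit : W α = 1)
    (hW'init : W' α = 1)
    (hWnc : ∀ β, β < α → NonCancellation (W β))
    (hW'nc : ∀ β, β < α → NonCancellation (W' β))
    (hWsd : ∀ γ, W γ = ∑ β, invert (W β) * M β γ)
    (hW'sd : ∀ γ, W' γ = ∑ β, invert (W' β) * M β γ) :
    W = W' := by
  have wf : WellFounded ((· > ·) : I → I → Prop) :=
    (Finite.to_wellFoundedGT (α := I)).wf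
  have key : ∀ γ, W γ = W' γ := by
    intro γ
    induction γ using wf.induction with
    | _ γ ih =>
    by_cases hle : γ ≤ α
    · rcases eq_or_lt_of_le hle with rfl | hlt
      · rw [hWinit, hW'init]
      · -- the key symmetry equation
        have hsum : W γ - W' γ = invert (W γ) - invert (W' γ) := by
          conv_lhs => rw [hWsd γ, hW'sd γ]
          rw [← Finset.sum_sub_distrib, Finset.sum_eq_single γ]
          · rw [hMdiag]; ring
          · intro β _ hβ
            by_cases h : γ ≤ β
            · rw [ih β (lt_of_le_of_ne h (Ne.symm hβ))]; ring
            · rw [hMtri β γ h]; ring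
          · simp
        have hsymm : ∀ i : ℤ, (W γ).coeff i - (W' γ).coeff i = (W γ).coeff (-i) - (W' γ).coeff (-i) := by
          intro i
          have := congrArg (fun f => f.coeff i) hsum
          simpa using this
        have hdle : ∀ i : ℤ, (W γ).coeff i - (W' γ).coeff i ≤ 0 := by
          intro i
          rcases hWnc γ hlt i with h0 | h0
          · rw [h0]; simpa using hW'pos γ i
          · rw [hsymm i, h0]
            simpa using hW'pos γ (-i)
        have hdge : ∀ i : ℤ, 0 ≤ (W γ).coeff i - (W' γ).coeff i := by
          intro i
          rcases hW'nc γ hlt i with h0 | h0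
          · rw [h0]; simpa using hWpos γ i
          · rw [hsymm i, h0]
            simpa using hWpos γ (-i)
        ext i
        have := le_antisymm (hdle i) (hdge i)
        linarith [this]
    · rw [hWsupp γ hle, hW'supp γ hle]
  funext γ; exact key γ
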